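/- Under the graph error model with independent measurement errors and edge unbiasedness λ = |E^c|·α = |E|·β, the Kolmogorov–Smirnov distance between D_E and the Skellam(λ,λ) distribution satisfies d_KS(D_E, Skellam(λ,λ)) ≤ (n_v(n_v−1)/2) · α / |E|. -/

import Mathlib

open MeasureTheory ProbabilityTheory Real

/-- The Skellam distribution: law of `X - Y` for `X, Y` independent Poisson random
variables with rates `l1` and `l2`. -/
noncomputable def skellamMeasure (l1 l2 : ℝ) : Measure ℤ :=
  ((poissonMeasure l1.toNNReal).prod (poissonMeasure l2.toNNReal)).map
    (fun p => (p.1 : ℤ) - (p.2 : ℤ))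

/-- Kolmogorov–Smirnov distance between two real random variables on `Ω`. -/
noncomputable def dKS {Ω : Type*} [MeasurableSpace Ω] (μ : Measure Ω) (X Z : Ω → ℝ) : ℝ :=
  ⨆ x : ℝ, |(μ {ω | X ω ≤ x}).toReal - (μ {ω | Z ω ≤ x}).toReal|

/-- Kolmogorov–Smirnov distance between two distributions on `ℤ`. -/
noncomputable def dKSZ (μ1 μ2 : Measure ℤ) : ℝ :=
  ⨆ x : ℝ, |(μ1 {k : ℤ | (k : ℝ) ≤ x}).toReal - (μ2 {k : ℤ | (k : ℝ) ≤ x}).toReal|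

/-- Kolmogorov–Smirnov distance between two distributions on `ℝ`. -/
noncomputable def dKSR (μ1 μ2 : Measure ℝ) : ℝ :=
  ⨆ x : ℝ, |(μ1 {y : ℝ | y ≤ x}).toReal - (μ2 {y : ℝ | y ≤ x}).toReal|

/-- Modified Bessel function of the first kind, of integer order `k`. -/
noncomputable def besselI (k : ℤ) (z : ℝ) : ℝ :=
  ∑' j : ℕ, (z / 2) ^ (2 * j + k.natAbs) /
    ((Nat.factorial j : ℝ) * (Nat.factorial (j + k.natAbs) : ℝ))


open MeasureTheory ProbabilityTheory Real

namespace SteinAux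

noncomputable def pois (lam : ℝ) (j : ℕ) : ℝ :=
  Real.exp (-lam) * lam ^ j / (Nat.factorial j : ℝ)

noncomputable def pcdf (lam : ℝ) (k : ℕ) : ℝ := ∑ j ∈ Finset.range (k+1), pois lam j

noncomputable def gg (lam : ℝ) (i : ℕ) : ℝ :=
  (Nat.factorial i : ℝ) * Real.exp lam / lam ^ (i+1)

variable {lam : ℝ}

lemma pois_pos (hl : 0 < lam) (j : ℕ) : 0 < pois lam j := by
  unfold pois
  have := Nat.factorial_pos j
  positivity

lemma hasSum_pois (hl : 0 < lam) : HasSum (pois lam) 1 := by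
  have h := poissonPMFRealSum lam.toNNReal
  have heq : ∀ n, poissonPMFReal lam.toNNReal n = pois lam n := by
    intro n
    unfold poissonPMFReal pois
    rw [Real.coe_toNNReal _ hl.le]
  have hf : pois lam = poissonPMFReal lam.toNNReal := funext fun n => (heq n).symm
  rw [hf]; exact h

lemma summable_pois (hl : 0 < lam) : Summable (pois lam) := (hasSum_pois hl).summable

lemma pcdf_nonneg (hl : 0 < lam) (k : ℕ) : 0 ≤ pcdf lam k :=
  Finset.sum_nonneg fun j _ => (pois_pos hl j).le

lemma pcdf_succ (k : ℕ) : pcdf lam (k+1) = pcdf lam k + pois lam (k+1) := by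
  unfold pcdf
  rw [Finset.sum_range_succ]

lemma pcdf_mono (hl : 0 < lam) {k k' : ℕ} (h : k ≤ k') : pcdf lam k ≤ pcdf lam k' := by
  unfold pcdf
  apply Finset.sum_le_sum_of_subset_of_nonneg
  · exact Finset.range_subset_range.2 (by omega)
  · intro j _ _; exact (pois_pos hl j).le

lemma pcdf_add_tail (hl : 0 < lam) (k : ℕ) :
    pcdf lam k + ∑' t : ℕ, pois lam (t + (k+1)) = 1 := by
  have h := Summable.sum_add_tsum_nat_add (f := pois lam) (k+1) (summable_pois hl)
  rw [(hasSum_pois hl).tsum_eq] at h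
  exact h

lemma tail_nonneg (hl : 0 < lam) (k : ℕ) : 0 ≤ ∑' t : ℕ, pois lam (t + (k+1)) :=
  tsum_nonneg fun t => (pois_pos hl _).le

lemma pcdf_le_one (hl : 0 < lam) (k : ℕ) : pcdf lam k ≤ 1 := by
  have h := pcdf_add_tail hl k
  have h2 := tail_nonneg hl k
  linarith

lemma pois_succ (hl : 0 < lam) (m : ℕ) :
    lam * pois lam m = ((m : ℝ)+1) * pois lam (m+1) := by
  unfold pois
  rw [Nat.factorial_succ]
  have h1 : (Nat.factorial m : ℝ) ≠ 0 := Nat.cast_ne_zero.2 (Nat.factorial_ne_zero m)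
  push_cast
  field_simp
  ring

lemma I1 (hl : 0 < lam) (i : ℕ) : lam * pcdf lam i ≤ ((i : ℝ)+1) * pcdf lam (i+1) := by
  unfold pcdf
  rw [Finset.mul_sum]
  calc ∑ m ∈ Finset.range (i+1), lam * pois lam m
      = ∑ m ∈ Finset.range (i+1), (((m : ℝ)+1) * pois lam (m+1)) :=
        Finset.sum_congr rfl fun m _ => pois_succ hl m
    _ ≤ ∑ m ∈ Finset.range (i+1), (((i : ℝ)+1) * pois lam (m+1)) := by
        apply Finset.sum_le_sum
        intro m hm
        have hm' : (m : ℝ) ≤ (i : ℝ) := by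
          exact_mod_cast Nat.lt_succ_iff.1 (Finset.mem_range.1 hm)
        exact mul_le_mul_of_nonneg_right (by linarith) (pois_pos hl _).le
    _ ≤ ((i : ℝ)+1) * ∑ j ∈ Finset.range (i+2), pois lam j := by
        rw [← Finset.mul_sum]
        apply mul_le_mul_of_nonneg_left _ (by positivity)
        rw [Finset.sum_range_succ' (fun j => pois lam j) (i+1)]
        have h0 : 0 ≤ pois lam 0 := (pois_pos hl _).le
        linarith

lemma summable_shift (hl : 0 < lam) (n : ℕ) : Summable (fun t : ℕ => pois lam (t + n)) :=
  (summable_nat_add_iff n).2 (summable_pois hl)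

lemma I2 (hl : 0 < lam) (i : ℕ) :
    ((i : ℝ)+1) * (1 - pcdf lam (i+1)) ≤ lam * (1 - pcdf lam i) := by
  have h1 : 1 - pcdf lam (i+1) = ∑' t : ℕ, pois lam (t + (i+2)) := by
    have := pcdf_add_tail hl (i+1); linarith
  have h2 : 1 - pcdf lam i = ∑' t : ℕ, pois lam (t + (i+1)) := by
    have := pcdf_add_tail hl i; linarith
  have key : ∀ t : ℕ, lam * pois lam (t + (i+1)) = ((t : ℝ) + (i : ℝ) + 2) * pois lam (t + (i+2)) := by
    intro t
    have h := pois_succ hl (t + (i+1))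
    have he : t + (i+1) + 1 = t + (i+2) := by omega
    rw [he] at h
    rw [h]
    push_cast
    ring
  rw [h1, h2, ← tsum_mul_left, ← tsum_mul_left]
  apply Summable.tsum_le_tsum
  · intro t
    rw [key t]
    apply mul_le_mul_of_nonneg_right _ (pois_pos hl _).le
    have : (0 : ℝ) ≤ (t : ℝ) := Nat.cast_nonneg t
    linarith
  · exact ((summable_shift hl (i+2)).mul_left _)
  · exact ((summable_shift hl (i+1)).mul_left lam)

end SteinAux
namespace SteinAux

noncomputable def Fk (lam : ℝ) (k : ℕ) : ℕ → ℝ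
  | 0 => 0
  | (j+1) => gg lam j * (pcdf lam (min j k) - pcdf lam k * pcdf lam j)

variable {lam : ℝ}

lemma gg_pos (hl : 0 < lam) (i : ℕ) : 0 < gg lam i := by
  unfold gg
  have := Nat.factorial_pos i
  positivity

lemma exp_mul_exp_neg : Real.exp (-lam) * Real.exp lam = 1 := by
  rw [← Real.exp_add]; simp

lemma pois_mul_gg_self (hl : 0 < lam) (i : ℕ) :
    pois lam (i+1) * gg lam (i+1) = 1 / lam := by
  have h1 : (Nat.factorial (i+1) : ℝ) ≠ 0 := Nat.cast_ne_zero.2 (Nat.factorial_ne_zero _)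
  have h3 := exp_mul_exp_neg (lam := lam)
  have hstep : pois lam (i+1) * gg lam (i+1)
      = (Real.exp (-lam) * Real.exp lam) * ((Nat.factorial (i+1) : ℝ) / (Nat.factorial (i+1) : ℝ))
        * (lam ^ (i+1) / lam ^ (i+1+1)) := by
    unfold pois gg; ring
  rw [hstep, h3, div_self h1, one_mul, one_mul,
    div_eq_div_iff (pow_ne_zero _ hl.ne') hl.ne', one_mul, ← pow_succ]

lemma pois_mul_gg_pred (hl : 0 < lam) (i : ℕ) :
    pois lam (i+1) * gg lam i = 1 / ((i : ℝ)+1) := by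
  have h1 : (Nat.factorial i : ℝ) ≠ 0 := Nat.cast_ne_zero.2 (Nat.factorial_ne_zero _)
  have h2 : lam ^ (i+1) ≠ 0 := pow_ne_zero _ hl.ne'
  have h3 := exp_mul_exp_neg (lam := lam)
  have h4 : (Nat.factorial (i+1) : ℝ) = ((i:ℝ)+1) * (Nat.factorial i : ℝ) := by
    rw [Nat.factorial_succ]; push_cast; ring
  have hstep : pois lam (i+1) * gg lam i
      = (Real.exp (-lam) * Real.exp lam) * (lam ^ (i+1) / lam ^ (i+1))
        * ((Nat.factorial i : ℝ) / (Nat.factorial (i+1) : ℝ)) := by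
    unfold pois gg; ring
  rw [hstep, h3, div_self h2, one_mul, one_mul, h4]
  rw [div_mul_eq_div_div_swap, div_self h1]

lemma lam_mul_gg (hl : 0 < lam) (i : ℕ) :
    lam * gg lam (i+1) = ((i : ℝ)+1) * gg lam i := by
  unfold gg
  have h2 : lam ^ (i+1) ≠ 0 := pow_ne_zero _ hl.ne'
  have h4 : (Nat.factorial (i+1) : ℝ) = ((i:ℝ)+1) * (Nat.factorial i : ℝ) := by
    rw [Nat.factorial_succ]; push_cast; ring
  rw [h4, pow_succ _ (i+1)]
  field_simp

lemma P_nonneg (hl : 0 < lam) (i : ℕ) :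
    0 ≤ gg lam (i+1) * pcdf lam (i+1) - gg lam i * pcdf lam i := by
  have h := I1 hl i
  have hg := gg_pos hl i
  have hlg := lam_mul_gg hl i
  have key : lam * (gg lam (i+1) * pcdf lam (i+1)) = gg lam i * (((i:ℝ)+1) * pcdf lam (i+1)) := by
    rw [← mul_assoc, hlg]; ring
  have key2 : gg lam i * (lam * pcdf lam i) ≤ gg lam i * (((i:ℝ)+1) * pcdf lam (i+1)) :=
    mul_le_mul_of_nonneg_left h hg.le
  nlinarith [key, key2, hl]

lemma B_nonneg (hl : 0 < lam) (i : ℕ) :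
    0 ≤ gg lam i * (1 - pcdf lam i) - gg lam (i+1) * (1 - pcdf lam (i+1)) := by
  have h := I2 hl i
  have hg := gg_pos hl i
  have hlg := lam_mul_gg hl i
  have key : lam * (gg lam (i+1) * (1 - pcdf lam (i+1)))
      = gg lam i * (((i:ℝ)+1) * (1 - pcdf lam (i+1))) := by
    rw [← mul_assoc, hlg]; ring
  have key2 : gg lam i * (((i:ℝ)+1) * (1 - pcdf lam (i+1))) ≤ gg lam i * (lam * (1 - pcdf lam i)) :=
    mul_le_mul_of_nonneg_left h hg.le
  nlinarith [key, key2, hl]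

lemma S_le (hl : 0 < lam) (i : ℕ) :
    (1 - pcdf lam (i+1)) * (gg lam (i+1) * pcdf lam (i+1) - gg lam i * pcdf lam i)
      + pcdf lam i * (gg lam i * (1 - pcdf lam i) - gg lam (i+1) * (1 - pcdf lam (i+1)))
      ≤ 1 / lam := by
  have hU : pcdf lam (i+1) = pcdf lam i + pois lam (i+1) := pcdf_succ i
  have hS : (1 - pcdf lam (i+1)) * (gg lam (i+1) * pcdf lam (i+1) - gg lam i * pcdf lam i)
      + pcdf lam i * (gg lam i * (1 - pcdf lam i) - gg lam (i+1) * (1 - pcdf lam (i+1)))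
      = pois lam (i+1) * (gg lam (i+1) * (1 - pcdf lam (i+1)) + gg lam i * pcdf lam i) := by
    rw [hU]; ring
  rw [hS, mul_add, ← mul_assoc, ← mul_assoc, pois_mul_gg_self hl, pois_mul_gg_pred hl]
  have h := I1 hl i
  have hi : (0:ℝ) < (i:ℝ)+1 := by positivity
  rw [div_mul_eq_mul_div, div_mul_eq_mul_div, one_mul, one_mul]
  rw [div_add_div _ _ hl.ne' hi.ne', div_le_div_iff₀ (by positivity) hl]
  have hUnn := pcdf_nonneg hl (i+1)
  nlinarith [h]

lemma steinBound (hl : 0 < lam) (k i : ℕ) :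
    |Fk lam k (i+2) - Fk lam k (i+1)| ≤ 1 / lam := by
  have hPn := P_nonneg hl i
  have hBn := B_nonneg hl i
  have hS := S_le hl i
  have hU0 := pcdf_nonneg hl i
  have hU1 := pcdf_nonneg hl (i+1)
  have hUk := pcdf_nonneg hl k
  have hU1le := pcdf_le_one hl (i+1)
  have hUkle := pcdf_le_one hl k
  have hFk2 : Fk lam k (i+2) = gg lam (i+1) * (pcdf lam (min (i+1) k) - pcdf lam k * pcdf lam (i+1)) := rfl
  have hFk1 : Fk lam k (i+1) = gg lam i * (pcdf lam (min i k) - pcdf lam k * pcdf lam i) := rfl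
  rw [hFk2, hFk1]
  rcases le_or_gt (i+1) k with h | h
  · rw [min_eq_left h, min_eq_left (by omega : i ≤ k)]
    have hmono : pcdf lam (i+1) ≤ pcdf lam k := pcdf_mono hl h
    have hExpr : gg lam (i+1) * (pcdf lam (i+1) - pcdf lam k * pcdf lam (i+1))
        - gg lam i * (pcdf lam i - pcdf lam k * pcdf lam i)
        = (1 - pcdf lam k) * (gg lam (i+1) * pcdf lam (i+1) - gg lam i * pcdf lam i) := by ring
    rw [hExpr, abs_of_nonneg (by nlinarith)]
    calc (1 - pcdf lam k) * (gg lam (i+1) * pcdf lam (i+1) - gg lam i * pcdf lam i)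
        ≤ (1 - pcdf lam (i+1)) * (gg lam (i+1) * pcdf lam (i+1) - gg lam i * pcdf lam i) := by
          nlinarith
      _ ≤ _ := by nlinarith [hS]
  · have hk : k ≤ i := by omega
    rw [min_eq_right (by omega : k ≤ i+1), min_eq_right hk]
    have hmono : pcdf lam k ≤ pcdf lam i := pcdf_mono hl hk
    have hExpr : gg lam (i+1) * (pcdf lam k - pcdf lam k * pcdf lam (i+1))
        - gg lam i * (pcdf lam k - pcdf lam k * pcdf lam i)
        = -(pcdf lam k * (gg lam i * (1 - pcdf lam i) - gg lam (i+1) * (1 - pcdf lam (i+1)))) := by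
      ring
    rw [hExpr, abs_neg, abs_of_nonneg (by nlinarith)]
    calc pcdf lam k * (gg lam i * (1 - pcdf lam i) - gg lam (i+1) * (1 - pcdf lam (i+1)))
        ≤ pcdf lam i * (gg lam i * (1 - pcdf lam i) - gg lam (i+1) * (1 - pcdf lam (i+1))) := by
          nlinarith
      _ ≤ _ := by nlinarith [hS]

lemma steinEq (hl : 0 < lam) (k j : ℕ) :
    lam * Fk lam k (j+1) - (j : ℝ) * Fk lam k j
      = (if j ≤ k then 1 else 0) - pcdf lam k := by
  cases j with
  | zero =>
    have hFk1 : Fk lam k 1 = gg lam 0 * (pcdf lam (min 0 k) - pcdf lam k * pcdf lam 0) := rfl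
    have hFk0 : Fk lam k 0 = 0 := rfl
    rw [hFk1, hFk0, if_pos (by omega : 0 ≤ k)]
    have h0 : min 0 k = 0 := by omega
    have hexp := exp_mul_exp_neg (lam := lam)
    have hpc : pcdf lam 0 = Real.exp (-lam) := by
      unfold pcdf pois; rw [Finset.sum_range_one]; simp
    have hgg : lam * gg lam 0 = Real.exp lam := by
      unfold gg
      rw [Nat.factorial_zero, pow_one]
      push_cast
      field_simp
    rw [h0, hpc]
    push_cast
    linear_combination (Real.exp (-lam) * (1 - pcdf lam k)) * hgg
      + (1 - pcdf lam k) * hexp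
  | succ i =>
    have hFk2 : Fk lam k (i+2) = gg lam (i+1) * (pcdf lam (min (i+1) k) - pcdf lam k * pcdf lam (i+1)) := rfl
    have hFk1 : Fk lam k (i+1) = gg lam i * (pcdf lam (min i k) - pcdf lam k * pcdf lam i) := rfl
    rw [(by rfl : i + 1 + 1 = i + 2), hFk2, hFk1]
    have hp1 : ((i:ℝ)+1) * gg lam i * pois lam (i+1) = 1 := by
      have h := pois_mul_gg_pred hl i
      have hi : ((i:ℝ)+1) ≠ 0 := by positivity
      field_simp at h
      linear_combination h
    push_cast
    rw [← mul_assoc, lam_mul_gg hl i]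
    rcases le_or_gt (i+1) k with h | h
    · rw [min_eq_left h, min_eq_left (by omega : i ≤ k), if_pos h]
      rw [pcdf_succ i]
      linear_combination (1 - pcdf lam k) * hp1
    · rw [min_eq_right (by omega : k ≤ i+1), min_eq_right (by omega : k ≤ i), if_neg (by omega)]
      rw [pcdf_succ i]
      linear_combination (-(pcdf lam k)) * hp1

end SteinAux

namespace SteinAux

open MeasureTheory ProbabilityTheory

variable {Ω ι : Type*} [MeasurableSpace Ω] {μ : Measure Ω} [IsProbabilityMeasure μ]

lemma integrable_comp_int {g : Ω → ℤ} (hg : Measurable g) {n : ℕ}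
    (hb : ∀ ω, g ω ∈ Finset.Icc (0:ℤ) (n:ℤ)) (φ : ℤ → ℝ) :
    Integrable (fun ω => φ (g ω)) μ := by
  have hm : Measurable fun ω => φ (g ω) := (measurable_from_top (f := φ)).comp hg
  refine (integrable_const (∑ z ∈ Finset.Icc (0:ℤ) (n:ℤ), ‖φ z‖)).mono'
    hm.aestronglyMeasurable ?_
  filter_upwards with ω
  exact Finset.single_le_sum (f := fun z => ‖φ z‖) (fun z _ => norm_nonneg _) (hb ω)

lemma toReal_compl {A : Set Ω} (hA : MeasurableSet A) : (μ Aᶜ).toReal = 1 - (μ A).toReal := by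
  rw [measure_compl hA (measure_ne_top μ A), measure_univ,
    ENNReal.toReal_sub_of_le prob_le_one (by simp)]
  simp

lemma prob_core (X : ι → Ω → ℤ) (hm : ∀ i, Measurable (X i))
    (h01 : ∀ i ω, X i ω = 0 ∨ X i ω = 1)
    (hind : iIndepFun X μ)
    (s : Finset ι) (hs : s.Nonempty) {p : ℝ} (hp : 0 < p)
    (hX : ∀ i ∈ s, (μ {ω | X i ω = 1}).toReal = p)
    {lam : ℝ} (hlam : lam = s.card * p) (k : ℕ) :
    |(μ {ω | ∑ i ∈ s, X i ω ≤ (k:ℤ)}).toReal - pcdf lam k| ≤ p := by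
  classical
  have hcard : 0 < (s.card : ℝ) := by
    have := Finset.card_pos.2 hs
    exact_mod_cast this
  have hl : 0 < lam := by rw [hlam]; positivity
  set n := s.card with hn
  -- the sum W
  set W : Ω → ℤ := fun ω => ∑ i ∈ s, X i ω with hWdef
  have hWmeas : Measurable W := Finset.measurable_sum s fun i _ => hm i
  have hXnn : ∀ i ω, (0:ℤ) ≤ X i ω := fun i ω => by rcases h01 i ω with h | h <;> omega
  have hXle : ∀ i ω, X i ω ≤ 1 := fun i ω => by rcases h01 i ω with h | h <;> omega
  have hWb : ∀ ω, W ω ∈ Finset.Icc (0:ℤ) (n:ℤ) := by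
    intro ω
    rw [Finset.mem_Icc]
    constructor
    · exact Finset.sum_nonneg fun i _ => hXnn i ω
    · calc ∑ i ∈ s, X i ω ≤ ∑ _i ∈ s, (1:ℤ) := Finset.sum_le_sum fun i _ => hXle i ω
        _ = (n:ℤ) := by simp [hn]
  -- the Stein function
  set h : ℤ → ℝ := fun z => Fk lam k z.toNat with hhdef
  have hnat : ∀ m : ℕ, h (m : ℤ) = Fk lam k m := by
    intro m; simp [hhdef]
  -- pointwise Stein equation
  have key : ∀ ω, lam * h (W ω + 1) - (W ω : ℝ) * h (W ω)
      = (if W ω ≤ (k:ℤ) then 1 else 0) - pcdf lam k := by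
    intro ω
    obtain ⟨m, hM⟩ : ∃ m : ℕ, W ω = (m:ℤ) :=
      ⟨(W ω).toNat, (Int.toNat_of_nonneg (Finset.mem_Icc.1 (hWb ω)).1).symm⟩
    rw [hM]
    have h1 : ((m:ℤ) + 1) = ((m+1 : ℕ) : ℤ) := by push_cast; ring
    rw [h1, hnat, hnat]
    have h2 : (if ((m:ℤ) ≤ (k:ℤ)) then (1:ℝ) else 0) = (if m ≤ k then (1:ℝ) else 0) := by
      by_cases hmk : m ≤ k
      · rw [if_pos (by exact_mod_cast hmk), if_pos hmk]
      · rw [if_neg (by exact_mod_cast hmk), if_neg hmk]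
    rw [h2]
    have h3 : (((m:ℤ)):ℝ) = (m:ℝ) := by push_cast; rfl
    rw [h3]
    exact steinEq hl k m
  -- measurability of events
  have hEmeas : MeasurableSet {ω | W ω ≤ (k:ℤ)} := hWmeas (measurableSet_Iic (a := (k:ℤ)))
  -- Integral of the Stein LHS equals the CDF difference
  have intInd : Integrable (fun ω => (if W ω ≤ (k:ℤ) then (1:ℝ) else 0)) μ := by
    have : (fun ω => (if W ω ≤ (k:ℤ) then (1:ℝ) else 0))
        = fun ω => ({ω' | W ω' ≤ (k:ℤ)}.indicator (fun _ => (1:ℝ))) ω := by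
      funext ω; rw [Set.indicator_apply]; rfl
    rw [this]
    exact (integrable_const (1:ℝ)).indicator hEmeas
  have step1 : ∫ ω, (lam * h (W ω + 1) - (W ω : ℝ) * h (W ω)) ∂μ
      = (μ {ω | W ω ≤ (k:ℤ)}).toReal - pcdf lam k := by
    have : (fun ω => lam * h (W ω + 1) - (W ω : ℝ) * h (W ω))
        = fun ω => (if W ω ≤ (k:ℤ) then (1:ℝ) else 0) - pcdf lam k := funext key
    rw [this]
    rw [integral_sub intInd (integrable_const _), integral_const, probReal_univ]
    have : ∫ ω, (if W ω ≤ (k:ℤ) then (1:ℝ) else 0) ∂μ = (μ {ω | W ω ≤ (k:ℤ)}).toReal := by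
      have heq : (fun ω => (if W ω ≤ (k:ℤ) then (1:ℝ) else 0))
          = fun ω => ({ω' | W ω' ≤ (k:ℤ)}.indicator (fun _ => (1:ℝ))) ω := by
        funext ω; rw [Set.indicator_apply]; rfl
      rw [heq, integral_indicator_const (1:ℝ) hEmeas, smul_eq_mul, mul_one, measureReal_def]
    rw [this]
    simp
  -- per-index decomposition
  have main2 : ∀ i ∈ s,
      (p * (∫ ω, h (W ω + 1) ∂μ) - ∫ ω, (X i ω : ℝ) * h (W ω) ∂μ)
      = p * p * ((∫ ω, h ((∑ j ∈ s.erase i, X j ω) + 2) ∂μ)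
          - ∫ ω, h ((∑ j ∈ s.erase i, X j ω) + 1) ∂μ)
      ∧ |(∫ ω, h ((∑ j ∈ s.erase i, X j ω) + 2) ∂μ)
          - ∫ ω, h ((∑ j ∈ s.erase i, X j ω) + 1) ∂μ| ≤ 1 / lam := by
    intro i hi
    set Wi : Ω → ℤ := fun ω => ∑ j ∈ s.erase i, X j ω with hWidef
    have hWimeas : Measurable Wi := Finset.measurable_sum _ fun j _ => hm j
    have hWib : ∀ ω, Wi ω ∈ Finset.Icc (0:ℤ) (n:ℤ) := by
      intro ω
      rw [Finset.mem_Icc]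
      refine ⟨Finset.sum_nonneg fun j _ => hXnn j ω, ?_⟩
      calc ∑ j ∈ s.erase i, X j ω ≤ ∑ _j ∈ s.erase i, (1:ℤ) :=
            Finset.sum_le_sum fun j _ => hXle j ω
        _ = ((s.erase i).card : ℤ) := by simp
        _ ≤ (n:ℤ) := by
            have := Finset.card_erase_le (a := i) (s := s)
            exact_mod_cast this.trans (le_refl n)
    have hsplit : ∀ ω, W ω = Wi ω + X i ω := by
      intro ω
      rw [hWdef, hWidef]
      exact (Finset.sum_erase_add s _ hi).symm
    -- independence
    have hIndi : IndepFun (X i) Wi μ := by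
      have h1 := hind.indepFun_finsetSum_of_notMem hm (Finset.notMem_erase i s)
      have h2 : (∑ j ∈ s.erase i, X j) = Wi := by
        funext ω; rw [hWidef, Finset.sum_apply]
      rw [h2] at h1
      exact h1.symm
    -- expectation of X i
    have EXi : ∫ ω, ((X i ω : ℤ) : ℝ) ∂μ = p := by
      have heq : (fun ω => ((X i ω : ℤ) : ℝ))
          = fun ω => ({ω' | X i ω' = 1}.indicator (fun _ => (1:ℝ))) ω := by
        funext ω
        rw [Set.indicator_apply]
        rcases h01 i ω with h | h <;> simp [h, Set.mem_setOf_eq]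
      have hE1 : MeasurableSet {ω | X i ω = 1} := hm i (measurableSet_singleton (1:ℤ))
      rw [heq, integral_indicator_const (1:ℝ) hE1, smul_eq_mul, mul_one, measureReal_def, hX i hi]
    -- product factorization
    have mulInt : ∀ (ψ : ℤ → ℝ),
        ∫ ω, ((X i ω : ℤ) : ℝ) * ψ (Wi ω) ∂μ = p * ∫ ω, ψ (Wi ω) ∂μ := by
      intro ψ
      have hind2 : IndepFun (fun ω => ((X i ω : ℤ) : ℝ)) (fun ω => ψ (Wi ω)) μ :=
        hIndi.comp (measurable_from_top (f := fun z : ℤ => (z : ℝ)))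
          (measurable_from_top (f := ψ))
      have hfact := hind2.integral_mul_eq_mul_integral
        ((measurable_from_top (f := fun z : ℤ => (z : ℝ))).comp (hm i)).aestronglyMeasurable
        ((measurable_from_top (f := ψ)).comp hWimeas).aestronglyMeasurable
      have hmul : ((fun ω => ((X i ω : ℤ) : ℝ)) * fun ω => ψ (Wi ω))
          = fun ω => ((X i ω : ℤ) : ℝ) * ψ (Wi ω) := rfl
      rw [hmul] at hfact
      rw [hfact, EXi]
    -- bounded multiplier integrability
    have hXb : ∀ ω, ‖((X i ω : ℤ) : ℝ)‖ ≤ 1 := by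
      intro ω; rcases h01 i ω with h | h <;> simp [h]
    have intWi : ∀ (ψ : ℤ → ℝ), Integrable (fun ω => ψ (Wi ω)) μ :=
      fun ψ => integrable_comp_int hWimeas hWib ψ
    have intW : ∀ (ψ : ℤ → ℝ), Integrable (fun ω => ψ (W ω)) μ :=
      fun ψ => integrable_comp_int hWmeas hWb ψ
    have intXWi : ∀ (ψ : ℤ → ℝ), Integrable (fun ω => ((X i ω : ℤ) : ℝ) * ψ (Wi ω)) μ :=
      fun ψ => (intWi ψ).bdd_mul
        ((measurable_from_top (f := fun z : ℤ => ((z:ℤ):ℝ))).comp (hm i)).aestronglyMeasurable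
        (Filter.Eventually.of_forall hXb)
    -- step A : ∫ Xi h(W) = p * ∫ h(Wi+1)
    have stepA : ∫ ω, (X i ω : ℝ) * h (W ω) ∂μ = p * ∫ ω, h (Wi ω + 1) ∂μ := by
      have hpt : (fun ω => (X i ω : ℝ) * h (W ω))
          = fun ω => (X i ω : ℝ) * (fun z => h (z+1)) (Wi ω) := by
        funext ω
        rcases h01 i ω with h0 | h0
        · simp [h0, hsplit ω]
        · simp [h0, hsplit ω]
      rw [hpt]
      exact mulInt (fun z => h (z+1))
    -- step B : ∫ h(W+1) = ∫ h(Wi+1) + p * (∫ h(Wi+2) - ∫ h(Wi+1))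
    have stepB : ∫ ω, h (W ω + 1) ∂μ
        = (∫ ω, h (Wi ω + 1) ∂μ) + p * ((∫ ω, h (Wi ω + 2) ∂μ) - ∫ ω, h (Wi ω + 1) ∂μ) := by
      have hi1 : Integrable (fun ω => h (Wi ω + 1)) μ := intWi (fun z => h (z+1))
      have hi2 : Integrable (fun ω => (X i ω : ℝ) * (h (Wi ω + 2) - h (Wi ω + 1))) μ :=
        intXWi (fun z => h (z+2) - h (z+1))
      have hpt : (fun ω => h (W ω + 1))
          = fun ω => h (Wi ω + 1) + (X i ω : ℝ) * (h (Wi ω + 2) - h (Wi ω + 1)) := by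
        funext ω
        rcases h01 i ω with h0 | h0
        · simp [h0, hsplit ω]
        · have hww : W ω + 1 = Wi ω + 2 := by rw [hsplit ω, h0]; ring
          simp [h0, hww]
      have hmul2 : ∫ ω, (X i ω : ℝ) * (h (Wi ω + 2) - h (Wi ω + 1)) ∂μ
          = p * ∫ ω, (h (Wi ω + 2) - h (Wi ω + 1)) ∂μ :=
        mulInt (fun z => h (z+2) - h (z+1))
      have hsub : ∫ ω, (h (Wi ω + 2) - h (Wi ω + 1)) ∂μ
          = (∫ ω, h (Wi ω + 2) ∂μ) - ∫ ω, h (Wi ω + 1) ∂μ :=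
        integral_sub (intWi (fun z => h (z+2))) (intWi (fun z => h (z+1)))
      rw [hpt, integral_add hi1 hi2, hmul2, hsub]
    constructor
    · rw [stepA, stepB]; ring
    · -- increment bound
      have hptb : ∀ ω, ‖h (Wi ω + 2) - h (Wi ω + 1)‖ ≤ 1 / lam := by
        intro ω
        obtain ⟨m, hM⟩ : ∃ m : ℕ, Wi ω = (m:ℤ) :=
          ⟨(Wi ω).toNat, (Int.toNat_of_nonneg (Finset.mem_Icc.1 (hWib ω)).1).symm⟩
        rw [hM]
        have e2 : ((m:ℤ) + 2) = ((m+2 : ℕ) : ℤ) := by push_cast; ring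
        have e1 : ((m:ℤ) + 1) = ((m+1 : ℕ) : ℤ) := by push_cast; ring
        rw [e2, e1, hnat, hnat]
        exact steinBound hl k m
      have := norm_integral_le_of_norm_le_const (μ := μ)
        (f := fun ω => h (Wi ω + 2) - h (Wi ω + 1)) (C := 1/lam)
        (Filter.Eventually.of_forall hptb)
      rw [probReal_univ] at this
      simp only [ENNReal.toReal_one, mul_one] at this
      calc |(∫ ω, h (Wi ω + 2) ∂μ) - ∫ ω, h (Wi ω + 1) ∂μ|
          = ‖∫ ω, (h (Wi ω + 2) - h (Wi ω + 1)) ∂μ‖ := by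
            rw [integral_sub (intWi (fun z => h (z+2))) (intWi (fun z => h (z+1)))]
            rfl
        _ ≤ 1 / lam := this
  -- assemble
  have intW : ∀ (ψ : ℤ → ℝ), Integrable (fun ω => ψ (W ω)) μ :=
    fun ψ => integrable_comp_int hWmeas hWb ψ
  have intXW : ∀ i ∈ s, Integrable (fun ω => (X i ω : ℝ) * h (W ω)) μ := by
    intro i hi
    refine (intW h).bdd_mul
      ((measurable_from_top (f := fun z : ℤ => ((z:ℤ):ℝ))).comp (hm i)).aestronglyMeasurable
      (c := 1) (Filter.Eventually.of_forall ?_)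
    intro ω; rcases h01 i ω with h0 | h0 <;> simp [h0]
  have hWsum : ∫ ω, (W ω : ℝ) * h (W ω) ∂μ = ∑ i ∈ s, ∫ ω, (X i ω : ℝ) * h (W ω) ∂μ := by
    rw [← integral_finset_sum s intXW]
    congr 1
    funext ω
    rw [← Finset.sum_mul]
    congr 1
    rw [hWdef]
    push_cast
    rfl
  have hlamsum : lam * ∫ ω, h (W ω + 1) ∂μ = ∑ _i ∈ s, p * ∫ ω, h (W ω + 1) ∂μ := by
    rw [Finset.sum_const, hlam]
    push_cast
    ring
  have total : (μ {ω | W ω ≤ (k:ℤ)}).toReal - pcdf lam k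
      = ∑ i ∈ s, (p * (∫ ω, h (W ω + 1) ∂μ) - ∫ ω, (X i ω : ℝ) * h (W ω) ∂μ) := by
    rw [← step1]
    have hint1 : Integrable (fun ω => lam * h (W ω + 1)) μ := by
      have := (intW (fun z => h (z+1))).const_mul lam
      simpa using this
    have hint2 : Integrable (fun ω => (W ω : ℝ) * h (W ω)) μ := by
      have := intW (fun z => (z : ℝ) * h z)
      simpa using this
    rw [integral_sub hint1 hint2]
    have : ∫ ω, lam * h (W ω + 1) ∂μ = lam * ∫ ω, h (W ω + 1) ∂μ :=
      integral_const_mul lam _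
    rw [this, hWsum, hlamsum, ← Finset.sum_sub_distrib]
  rw [total]
  calc |∑ i ∈ s, (p * (∫ ω, h (W ω + 1) ∂μ) - ∫ ω, (X i ω : ℝ) * h (W ω) ∂μ)|
      ≤ ∑ i ∈ s, |p * (∫ ω, h (W ω + 1) ∂μ) - ∫ ω, (X i ω : ℝ) * h (W ω) ∂μ| :=
        Finset.abs_sum_le_sum_abs _ _
    _ ≤ ∑ _i ∈ s, p * p * (1/lam) := by
        apply Finset.sum_le_sum
        intro i hi
        obtain ⟨heq, hb⟩ := main2 i hi
        rw [heq, abs_mul]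
        have : |p * p| = p * p := abs_of_nonneg (by positivity)
        rw [this]
        exact mul_le_mul_of_nonneg_left hb (by positivity)
    _ = p := by
        rw [Finset.sum_const, hlam, ← hn]
        field_simp
        rw [nsmul_eq_mul, mul_div_assoc', mul_comm, mul_div_assoc, div_self hcard.ne', mul_one]
end SteinAux

namespace SteinAux

open MeasureTheory ProbabilityTheory

variable {lam : ℝ}

lemma poisson_singleton (hl : 0 < lam) (a : ℕ) :
    poissonMeasure lam.toNNReal {a} = ENNReal.ofReal (pois lam a) := by
  rw [poissonMeasure_singleton]
  unfold pois
  rw [Real.coe_toNNReal _ hl.le]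

lemma poisson_cdf (hl : 0 < lam) (k : ℕ) :
    (poissonMeasure lam.toNNReal {b : ℕ | (b:ℤ) ≤ (k:ℤ)}).toReal = pcdf lam k := by
  have hset : {b : ℕ | (b:ℤ) ≤ (k:ℤ)} = ↑(Finset.range (k+1)) := by
    ext b
    simp only [Set.mem_setOf_eq, Finset.coe_range, Set.mem_Iio]
    omega
  rw [hset, ← sum_measure_singleton]
  rw [ENNReal.toReal_sum (fun b _ => measure_ne_top _ _)]
  unfold pcdf
  apply Finset.sum_congr rfl
  intro b _
  rw [poisson_singleton hl b, ENNReal.toReal_ofReal (pois_pos hl b).le]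

lemma toReal_compl' {Ω' : Type*} [MeasurableSpace Ω'] {μ' : Measure Ω'} [IsProbabilityMeasure μ']
    {A : Set Ω'} (hA : MeasurableSet A) : (μ' Aᶜ).toReal = 1 - (μ' A).toReal := by
  rw [measure_compl hA (measure_ne_top μ' A), measure_univ,
    ENNReal.toReal_sub_of_le prob_le_one (by simp)]
  simp

lemma poisson_tail (hl : 0 < lam) (c : ℤ) :
    (poissonMeasure lam.toNNReal {b : ℕ | c ≤ (b:ℤ)}).toReal
      = if 0 < c then 1 - pcdf lam (c-1).toNat else 1 := by
  rcases lt_or_ge 0 c with h | h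
  · rw [if_pos h]
    set k : ℕ := (c-1).toNat with hk
    have hck : c - 1 = (k:ℤ) := by rw [hk, Int.toNat_of_nonneg (by omega)]
    have hset : {b : ℕ | c ≤ (b:ℤ)} = {b : ℕ | (b:ℤ) ≤ (k:ℤ)}ᶜ := by
      ext b
      simp only [Set.mem_setOf_eq, Set.mem_compl_iff, not_le]
      omega
    rw [hset, toReal_compl' (by trivial), poisson_cdf hl]
  · rw [if_neg (not_lt.2 h)]
    have hset : {b : ℕ | c ≤ (b:ℤ)} = Set.univ := by
      ext b
      simp only [Set.mem_setOf_eq, Set.mem_univ, iff_true]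
      omega
    rw [hset, measure_univ, ENNReal.toReal_one]

lemma skellam_cdf (hl : 0 < lam) (m : ℤ) :
    ((skellamMeasure lam lam) {q : ℤ | q ≤ m}).toReal
      = ∑' a : ℕ, pois lam a *
          (poissonMeasure lam.toNNReal {b : ℕ | (a:ℤ) - m ≤ (b:ℤ)}).toReal := by
  have hfmeas : Measurable (fun p : ℕ × ℕ => (p.1 : ℤ) - (p.2 : ℤ)) :=
    (measurable_from_top.comp measurable_fst).sub (measurable_from_top.comp measurable_snd)
  rw [skellamMeasure, Measure.map_apply hfmeas trivial]
  rw [Measure.prod_apply (hfmeas trivial)]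
  rw [lintegral_countable']
  have hterm : ∀ a : ℕ,
      (poissonMeasure lam.toNNReal) (Prod.mk a ⁻¹' ((fun p : ℕ × ℕ => (p.1 : ℤ) - (p.2 : ℤ)) ⁻¹' {q : ℤ | q ≤ m}))
        * (poissonMeasure lam.toNNReal) {a}
      = ENNReal.ofReal (pois lam a)
        * (poissonMeasure lam.toNNReal) {b : ℕ | (a:ℤ) - m ≤ (b:ℤ)} := by
    intro a
    have hsets : (Prod.mk a ⁻¹' ((fun p : ℕ × ℕ => (p.1 : ℤ) - (p.2 : ℤ)) ⁻¹' {q : ℤ | q ≤ m}))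
        = {b : ℕ | (a:ℤ) - m ≤ (b:ℤ)} := by
      ext b
      simp only [Set.mem_preimage, Set.mem_setOf_eq]
      omega
    rw [hsets, poisson_singleton hl a, mul_comm]
  calc (∑' a : ℕ, (poissonMeasure lam.toNNReal) (Prod.mk a ⁻¹' ((fun p : ℕ × ℕ => (p.1 : ℤ) - (p.2 : ℤ)) ⁻¹' {q : ℤ | q ≤ m}))
        * (poissonMeasure lam.toNNReal) {a}).toReal
      = (∑' a : ℕ, ENNReal.ofReal (pois lam a)
          * (poissonMeasure lam.toNNReal) {b : ℕ | (a:ℤ) - m ≤ (b:ℤ)}).toReal := by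
        exact congrArg ENNReal.toReal (tsum_congr hterm)
    _ = ∑' a : ℕ, (ENNReal.ofReal (pois lam a)
          * (poissonMeasure lam.toNNReal) {b : ℕ | (a:ℤ) - m ≤ (b:ℤ)}).toReal := by
        apply ENNReal.tsum_toReal_eq
        intro a
        exact ENNReal.mul_ne_top ENNReal.ofReal_ne_top (measure_ne_top _ _)
    _ = _ := by
        apply tsum_congr
        intro a
        rw [ENNReal.toReal_mul, ENNReal.toReal_ofReal (pois_pos hl a).le]

open scoped Classical in
lemma partition_int {Ω' : Type*} [MeasurableSpace Ω'] (μ' : Measure Ω') [IsProbabilityMeasure μ']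
    (Z : Ω' → ℤ) (hZ : Measurable Z) (N : ℕ) (hb : ∀ ω, 0 ≤ Z ω ∧ Z ω ≤ (N:ℤ))
    (A : Set ℤ) :
    (μ' {ω | Z ω ∈ A}).toReal
      = ∑ z ∈ Finset.range (N+1),
          if (z:ℤ) ∈ A then (μ' {ω | Z ω = (z:ℤ)}).toReal else 0 := by
  classical
  set B : ℕ → Set Ω' := fun z => if (z:ℤ) ∈ A then {ω | Z ω = (z:ℤ)} else ∅ with hB
  have hBmeas : ∀ z ∈ Finset.range (N+1), MeasurableSet (B z) := by
    intro z _
    simp only [hB]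
    split_ifs
    · exact hZ (measurableSet_singleton _)
    · exact MeasurableSet.empty
  have hBsub : ∀ z, B z ⊆ {ω | Z ω = (z:ℤ)} := by
    intro z ω hω
    simp only [hB] at hω
    split_ifs at hω
    · exact hω
    · exact absurd hω (Set.notMem_empty ω)
  have hdisj : Set.PairwiseDisjoint ↑(Finset.range (N+1)) B := by
    intro z _ z' _ hne
    apply Set.disjoint_left.2
    intro ω hω hω'
    have h1 := hBsub z hω
    have h2 := hBsub z' hω'
    simp only [Set.mem_setOf_eq] at h1 h2
    exact hne (by exact_mod_cast h1.symm.trans h2)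
  have hset : {ω | Z ω ∈ A} = ⋃ z ∈ Finset.range (N+1), B z := by
    ext ω
    simp only [Set.mem_setOf_eq, Set.mem_iUnion, exists_prop]
    constructor
    · intro hA
      obtain ⟨h0, hN⟩ := hb ω
      refine ⟨(Z ω).toNat, ?_, ?_⟩
      · rw [Finset.mem_range]; omega
      · simp only [hB]
        rw [Int.toNat_of_nonneg h0, if_pos hA]
        exact rfl
    · rintro ⟨z, _, hmem⟩
      have h1 := hBsub z hmem
      simp only [Set.mem_setOf_eq] at h1
      simp only [hB] at hmem
      split_ifs at hmem with hzA
      · rw [h1]; exact hzA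
      · exact absurd hmem (Set.notMem_empty ω)
  rw [hset, measure_biUnion_finset hdisj hBmeas,
    ENNReal.toReal_sum (fun z _ => measure_ne_top _ _)]
  apply Finset.sum_congr rfl
  intro z _
  simp only [hB]
  split_ifs with hzA
  · rfl
  · simp

lemma decomp_pair {Ω' : Type*} [MeasurableSpace Ω'] (μ' : Measure Ω') [IsProbabilityMeasure μ']
    (X Z : Ω' → ℤ) (hX : Measurable X) (hZ : Measurable Z) (hind : IndepFun X Z μ')
    (N : ℕ) (hb : ∀ ω, 0 ≤ Z ω ∧ Z ω ≤ (N:ℤ)) (m : ℤ) :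
    (μ' {ω | X ω - Z ω ≤ m}).toReal
      = ∑ z ∈ Finset.range (N+1),
          (μ' {ω | Z ω = (z:ℤ)}).toReal * (μ' {ω | X ω ≤ m + (z:ℤ)}).toReal := by
  classical
  set B : ℕ → Set Ω' := fun z => {ω | Z ω = (z:ℤ)} ∩ {ω | X ω ≤ m + (z:ℤ)} with hB
  have hBmeas : ∀ z ∈ Finset.range (N+1), MeasurableSet (B z) := fun z _ =>
    (hZ (measurableSet_singleton _)).inter (hX (measurableSet_Iic))
  have hdisj : Set.PairwiseDisjoint ↑(Finset.range (N+1)) B := by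
    intro z _ z' _ hne
    apply Set.disjoint_left.2
    intro ω hω hω'
    exact hne (by exact_mod_cast (hω.1.symm.trans hω'.1))
  have hset : {ω | X ω - Z ω ≤ m} = ⋃ z ∈ Finset.range (N+1), B z := by
    ext ω
    simp only [Set.mem_setOf_eq, Set.mem_iUnion, exists_prop, hB, Set.mem_inter_iff]
    constructor
    · intro hle
      obtain ⟨h0, hN⟩ := hb ω
      refine ⟨(Z ω).toNat, by rw [Finset.mem_range]; omega, ?_, ?_⟩
      · rw [Int.toNat_of_nonneg h0]
      · rw [Int.toNat_of_nonneg h0]; omega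
    · rintro ⟨z, _, hz, hx⟩
      omega
  rw [hset, measure_biUnion_finset hdisj hBmeas,
    ENNReal.toReal_sum (fun z _ => measure_ne_top _ _)]
  apply Finset.sum_congr rfl
  intro z _
  have hZset : {ω | Z ω = (z:ℤ)} = Z ⁻¹' {(z:ℤ)} := by ext ω; simp
  have hXset : {ω | X ω ≤ m + (z:ℤ)} = X ⁻¹' (Set.Iic (m + (z:ℤ))) := by ext ω; simp
  have : B z = X ⁻¹' (Set.Iic (m + (z:ℤ))) ∩ Z ⁻¹' {(z:ℤ)} := by
    simp only [hB]; rw [hZset, hXset, Set.inter_comm]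
  rw [this, hind.measure_inter_preimage_eq_mul _ _ trivial trivial, ENNReal.toReal_mul,
    hZset, hXset, mul_comm]

end SteinAux

namespace SteinAux

open MeasureTheory ProbabilityTheory

variable {lam : ℝ}

lemma ks_bound {Ω' : Type*} [MeasurableSpace Ω'] (μ' : Measure Ω') [IsProbabilityMeasure μ']
    (hl : 0 < lam)
    (X Z : Ω' → ℤ) (hXm : Measurable X) (hZm : Measurable Z) (hind : IndepFun X Z μ')
    (N : ℕ) (hbZ : ∀ ω, 0 ≤ Z ω ∧ Z ω ≤ (N:ℤ)) (hbX : ∀ ω, 0 ≤ X ω)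
    {al be : ℝ} (hal : 0 ≤ al) (hbe : 0 ≤ be)
    (hXcdf : ∀ k : ℕ, |(μ' {ω | X ω ≤ (k:ℤ)}).toReal - pcdf lam k| ≤ al)
    (hZcdf : ∀ k : ℕ, |(μ' {ω | Z ω ≤ (k:ℤ)}).toReal - pcdf lam k| ≤ be)
    (m : ℤ) :
    |(μ' {ω | X ω - Z ω ≤ m}).toReal
      - ((skellamMeasure lam lam) {q : ℤ | q ≤ m}).toReal| ≤ al + be := by
  classical
  set a : ℕ → ℝ := fun z => (μ' {ω | Z ω = (z:ℤ)}).toReal with ha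
  set Phi : ℤ → ℝ := fun c => if 0 ≤ c then pcdf lam c.toNat else 0 with hPhi
  set rZ : ℕ → ℝ := fun t => (μ' {ω | (t:ℤ) - m ≤ Z ω}).toReal with hrZ
  set rP : ℕ → ℝ := fun t =>
    (poissonMeasure lam.toNNReal {b : ℕ | (t:ℤ) - m ≤ (b:ℤ)}).toReal with hrP
  have ha_nonneg : ∀ z, 0 ≤ a z := fun z => ENNReal.toReal_nonneg
  have ha_sum : ∑ z ∈ Finset.range (N+1), a z = 1 := by
    have h := partition_int μ' Z hZm N hbZ Set.univ
    have huniv : {ω | Z ω ∈ Set.univ} = (Set.univ : Set Ω') := by ext ω; simp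
    rw [huniv, measure_univ, ENNReal.toReal_one] at h
    simp only [Set.mem_univ, if_true] at h
    exact h.symm
  -- step 1 : replace X-cdf by Poisson cdf
  have hxcPhi : ∀ z : ℕ, |(μ' {ω | X ω ≤ m + (z:ℤ)}).toReal - Phi (m + (z:ℤ))| ≤ al := by
    intro z
    rcases le_or_gt 0 (m + (z:ℤ)) with h | h
    · set k : ℕ := (m + (z:ℤ)).toNat with hk
      have hmk : m + (z:ℤ) = (k:ℤ) := by rw [hk, Int.toNat_of_nonneg h]
      have hPh : Phi (m + (z:ℤ)) = pcdf lam k := by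
        simp only [hPhi]
        rw [if_pos h]
      rw [hPh, hmk]
      exact hXcdf k
    · have hempty : {ω | X ω ≤ m + (z:ℤ)} = ∅ := by
        ext ω
        simp only [Set.mem_setOf_eq, Set.mem_empty_iff_false, iff_false, not_le]
        exact lt_of_lt_of_le h (hbX ω)
      have hPh : Phi (m + (z:ℤ)) = 0 := by
        simp only [hPhi]
        rw [if_neg (not_le.2 h)]
      rw [hempty, hPh]
      simpa using hal
  have step1 : |(μ' {ω | X ω - Z ω ≤ m}).toReal
      - ∑ z ∈ Finset.range (N+1), a z * Phi (m + (z:ℤ))| ≤ al := by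
    rw [decomp_pair μ' X Z hXm hZm hind N hbZ m, ← Finset.sum_sub_distrib]
    calc |∑ z ∈ Finset.range (N+1),
            (a z * (μ' {ω | X ω ≤ m + (z:ℤ)}).toReal - a z * Phi (m + (z:ℤ)))|
        ≤ ∑ z ∈ Finset.range (N+1),
            |a z * (μ' {ω | X ω ≤ m + (z:ℤ)}).toReal - a z * Phi (m + (z:ℤ))| :=
          Finset.abs_sum_le_sum_abs _ _
      _ ≤ ∑ z ∈ Finset.range (N+1), a z * al := by
          apply Finset.sum_le_sum
          intro z _
          rw [← mul_sub, abs_mul, abs_of_nonneg (ha_nonneg z)]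
          exact mul_le_mul_of_nonneg_left (hxcPhi z) (ha_nonneg z)
      _ = al := by rw [← Finset.sum_mul, ha_sum, one_mul]
  -- step 2 : hybrid equals tsum over Poisson of Z-tails
  have hPhitsum : ∀ z : ℕ, Phi (m + (z:ℤ))
      = ∑' t : ℕ, pois lam t * (if (t:ℤ) - m ≤ (z:ℤ) then 1 else 0) := by
    intro z
    rcases le_or_gt 0 (m + (z:ℤ)) with h | h
    · set k : ℕ := (m + (z:ℤ)).toNat with hk
      have hmk : m + (z:ℤ) = (k:ℤ) := by rw [hk, Int.toNat_of_nonneg h]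
      have hPh : Phi (m + (z:ℤ)) = pcdf lam k := by
        simp only [hPhi]; rw [if_pos h]
      rw [hPh]
      rw [tsum_eq_sum (s := Finset.range (k+1)) (by
        intro t ht
        rw [Finset.mem_range] at ht
        rw [if_neg (by omega), mul_zero])]
      unfold pcdf
      apply Finset.sum_congr rfl
      intro t ht
      rw [Finset.mem_range] at ht
      rw [if_pos (by omega), mul_one]
    · have hPh : Phi (m + (z:ℤ)) = 0 := by
        simp only [hPhi]; rw [if_neg (not_le.2 h)]
      rw [hPh]
      symm
      have : ∀ t : ℕ, pois lam t * (if (t:ℤ) - m ≤ (z:ℤ) then (1:ℝ) else 0) = 0 := by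
        intro t
        rw [if_neg (by omega), mul_zero]
      rw [tsum_congr this, tsum_zero]
  have hsummand : ∀ z : ℕ, Summable (fun t : ℕ =>
      pois lam t * (if (t:ℤ) - m ≤ (z:ℤ) then (1:ℝ) else 0)) := by
    intro z
    refine Summable.of_nonneg_of_le ?_ ?_ (summable_pois hl)
    · intro t; split_ifs <;> simp [le_of_lt (pois_pos hl t), (pois_pos hl t).le]
    · intro t; split_ifs <;> simp [(pois_pos hl t).le]
  have step2 : ∑ z ∈ Finset.range (N+1), a z * Phi (m + (z:ℤ))
      = ∑' t : ℕ, pois lam t * rZ t := by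
    have h1 : ∀ z ∈ Finset.range (N+1), a z * Phi (m + (z:ℤ))
        = ∑' t : ℕ, a z * (pois lam t * (if (t:ℤ) - m ≤ (z:ℤ) then 1 else 0)) := by
      intro z _
      rw [hPhitsum z, tsum_mul_left]
    rw [Finset.sum_congr rfl h1]
    rw [← Summable.tsum_finsetSum (fun z _ => Summable.mul_left (a z) (hsummand z))]
    apply tsum_congr
    intro t
    have h2 : ∀ z ∈ Finset.range (N+1),
        a z * (pois lam t * (if (t:ℤ) - m ≤ (z:ℤ) then (1:ℝ) else 0))
        = pois lam t * (if (z:ℤ) ∈ {x : ℤ | (t:ℤ) - m ≤ x} then a z else 0) := by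
      intro z _
      simp only [Set.mem_setOf_eq]
      split_ifs <;> ring
    rw [Finset.sum_congr rfl h2, ← Finset.mul_sum]
    congr 1
    have h3 := partition_int μ' Z hZm N hbZ {x : ℤ | (t:ℤ) - m ≤ x}
    have hrZt : rZ t = (μ' {ω | Z ω ∈ {x : ℤ | (t:ℤ) - m ≤ x}}).toReal := rfl
    rw [hrZt, h3]
    apply Finset.sum_congr rfl
    intro z _
    by_cases hc : (z:ℤ) ∈ {x : ℤ | (t:ℤ) - m ≤ x}
    · rw [if_pos hc, if_pos hc]
    · rw [if_neg hc, if_neg hc]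
  -- step 3 : compare Z-tails with Poisson tails
  have hrZP : ∀ t : ℕ, |rZ t - rP t| ≤ be := by
    intro t
    rcases lt_or_ge 0 ((t:ℤ) - m) with h | h
    · set k : ℕ := ((t:ℤ) - m - 1).toNat with hk
      have hck : (t:ℤ) - m - 1 = (k:ℤ) := by rw [hk, Int.toNat_of_nonneg (by omega)]
      have hZset : {ω | (t:ℤ) - m ≤ Z ω} = {ω | Z ω ≤ (k:ℤ)}ᶜ := by
        ext ω
        simp only [Set.mem_setOf_eq, Set.mem_compl_iff, not_le]
        omega
      have hrZt : rZ t = 1 - (μ' {ω | Z ω ≤ (k:ℤ)}).toReal := by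
        simp only [hrZ]
        rw [hZset, toReal_compl' (A := {ω | Z ω ≤ (k:ℤ)}) (by exact hZm measurableSet_Iic)]
      have hrPt : rP t = 1 - pcdf lam k := by
        simp only [hrP]
        rw [poisson_tail hl, if_pos h]
      rw [hrZt, hrPt]
      have := hZcdf k
      rw [abs_sub_comm] at this
      calc |1 - (μ' {ω | Z ω ≤ (k:ℤ)}).toReal - (1 - pcdf lam k)|
          = |pcdf lam k - (μ' {ω | Z ω ≤ (k:ℤ)}).toReal| := by ring_nf
        _ ≤ be := this
    · have hZset : {ω | (t:ℤ) - m ≤ Z ω} = Set.univ := by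
        ext ω
        simp only [Set.mem_setOf_eq, Set.mem_univ, iff_true]
        exact le_trans h (hbZ ω).1
      have hPset : {b : ℕ | (t:ℤ) - m ≤ (b:ℤ)} = Set.univ := by
        ext b
        simp only [Set.mem_setOf_eq, Set.mem_univ, iff_true]
        omega
      have hrZt : rZ t = 1 := by
        simp only [hrZ]; rw [hZset, measure_univ, ENNReal.toReal_one]
      have hrPt : rP t = 1 := by
        simp only [hrP]; rw [hPset, measure_univ, ENNReal.toReal_one]
      rw [hrZt, hrPt]
      simpa using hbe
  have hrZ01 : ∀ t, 0 ≤ rZ t ∧ rZ t ≤ 1 := by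
    intro t
    exact ⟨ENNReal.toReal_nonneg, by
      simp only [hrZ]
      have := prob_le_one (μ := μ') (s := {ω | (t:ℤ) - m ≤ Z ω})
      exact ENNReal.toReal_le_of_le_ofReal zero_le_one (by simpa using this)⟩
  have hrP01 : ∀ t, 0 ≤ rP t ∧ rP t ≤ 1 := by
    intro t
    exact ⟨ENNReal.toReal_nonneg, by
      simp only [hrP]
      have := prob_le_one (μ := poissonMeasure lam.toNNReal)
        (s := {b : ℕ | (t:ℤ) - m ≤ (b:ℤ)})
      exact ENNReal.toReal_le_of_le_ofReal zero_le_one (by simpa using this)⟩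
  have hS1 : Summable (fun t => pois lam t * rZ t) :=
    Summable.of_nonneg_of_le
      (fun t => mul_nonneg (pois_pos hl t).le (hrZ01 t).1)
      (fun t => by
        calc pois lam t * rZ t ≤ pois lam t * 1 :=
              mul_le_mul_of_nonneg_left (hrZ01 t).2 (pois_pos hl t).le
          _ = pois lam t := mul_one _)
      (summable_pois hl)
  have hS2 : Summable (fun t => pois lam t * rP t) :=
    Summable.of_nonneg_of_le
      (fun t => mul_nonneg (pois_pos hl t).le (hrP01 t).1)
      (fun t => by
        calc pois lam t * rP t ≤ pois lam t * 1 :=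
              mul_le_mul_of_nonneg_left (hrP01 t).2 (pois_pos hl t).le
          _ = pois lam t := mul_one _)
      (summable_pois hl)
  have hSd : Summable (fun t => ‖pois lam t * rZ t - pois lam t * rP t‖) :=
    Summable.of_nonneg_of_le (fun t => norm_nonneg _)
      (fun t => by
        rw [Real.norm_eq_abs, ← mul_sub, abs_mul, abs_of_nonneg (pois_pos hl t).le]
        exact mul_le_mul_of_nonneg_left (hrZP t) (pois_pos hl t).le)
      ((summable_pois hl).mul_right be)
  have step3 : |(∑' t : ℕ, pois lam t * rZ t)
      - ((skellamMeasure lam lam) {q : ℤ | q ≤ m}).toReal| ≤ be := by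
    rw [skellam_cdf hl m]
    rw [← Summable.tsum_sub hS1 hS2]
    calc |∑' t : ℕ, (pois lam t * rZ t - pois lam t * rP t)|
        ≤ ∑' t : ℕ, ‖pois lam t * rZ t - pois lam t * rP t‖ := by
          rw [← Real.norm_eq_abs]
          exact norm_tsum_le_tsum_norm hSd
      _ ≤ ∑' t : ℕ, pois lam t * be := by
          apply Summable.tsum_le_tsum _ hSd ((summable_pois hl).mul_right be)
          intro t
          rw [Real.norm_eq_abs, ← mul_sub, abs_mul, abs_of_nonneg (pois_pos hl t).le]
          exact mul_le_mul_of_nonneg_left (hrZP t) (pois_pos hl t).le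
      _ = be := by rw [tsum_mul_right, (hasSum_pois hl).tsum_eq, one_mul]
  -- combine
  calc |(μ' {ω | X ω - Z ω ≤ m}).toReal
        - ((skellamMeasure lam lam) {q : ℤ | q ≤ m}).toReal|
      ≤ |(μ' {ω | X ω - Z ω ≤ m}).toReal - ∑ z ∈ Finset.range (N+1), a z * Phi (m + (z:ℤ))|
        + |(∑ z ∈ Finset.range (N+1), a z * Phi (m + (z:ℤ)))
            - ((skellamMeasure lam lam) {q : ℤ | q ≤ m}).toReal| := abs_sub_le _ _ _
    _ ≤ al + be := by
        apply add_le_add step1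
        rw [step2]
        exact step3

end SteinAux

/-- Under the graph error model with independent measurement errors and
edge unbiasedness `λ = |Eᶜ|α = |E|β`, one has
`d_KS(D_E, Skellam(λ,λ)) ≤ (n_v(n_v−1)/2)·α/|E|`. -/
theorem stmt_7 {Ω V : Type*} [MeasurableSpace Ω] (μ : Measure Ω) [IsProbabilityMeasure μ]
    [Fintype V] [DecidableEq V]
    (G : SimpleGraph V) [DecidableRel G.Adj]
    (hE : 1 ≤ G.edgeFinset.card) (hEc : 1 ≤ Gᶜ.edgeFinset.card)
    (Y : Sym2 V → Ω → ℤ)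
    (hmeas : ∀ e, Measurable (Y e))
    (h01 : ∀ e ω, Y e ω = 0 ∨ Y e ω = 1)
    -- the errors on the distinct vertex pairs are independent
    (hindep : iIndepFun
      (fun e : {e : Sym2 V // ¬ e.IsDiag} => Y e.1) μ)
    (α β : ℝ) (hα : α ∈ Set.Ioo (0 : ℝ) 1) (hβ : β ∈ Set.Ioo (0 : ℝ) 1)
    (hYα : ∀ e ∈ Gᶜ.edgeFinset, (μ {ω | Y e ω = 1}).toReal = α)
    (hYβ : ∀ e ∈ G.edgeFinset, (μ {ω | Y e ω = 1}).toReal = 1 - β)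
    (lam : ℝ)
    (hlam1 : lam = (Gᶜ.edgeFinset.card : ℝ) * α)
    (hlam2 : lam = (G.edgeFinset.card : ℝ) * β)
    (D : Ω → ℤ)
    (hD : D = fun ω => ∑ e ∈ Gᶜ.edgeFinset, Y e ω - ∑ e ∈ G.edgeFinset, (1 - Y e ω)) :
    dKSZ (μ.map D) (skellamMeasure lam lam) ≤
      ((Fintype.card V : ℝ) * ((Fintype.card V : ℝ) - 1) / 2) * α /
        (G.edgeFinset.card : ℝ) := by
  classical
  obtain ⟨hα0, hα1⟩ := hα
  obtain ⟨hβ0, hβ1⟩ := hβ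
  have hEpos : (0:ℝ) < (G.edgeFinset.card : ℝ) := by exact_mod_cast hE
  have hEcpos : (0:ℝ) < (Gᶜ.edgeFinset.card : ℝ) := by exact_mod_cast hEc
  have hl : 0 < lam := by rw [hlam1]; positivity
  -- disjointness of edge sets
  have hdisjE : ∀ e : Sym2 V, e ∈ G.edgeFinset → e ∈ Gᶜ.edgeFinset → False := by
    intro e
    refine Sym2.ind (fun u v => ?_) e
    intro heG heGc
    rw [SimpleGraph.mem_edgeFinset, SimpleGraph.mem_edgeSet] at heG heGc
    rw [SimpleGraph.compl_adj] at heGc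
    exact heGc.2 heG
  -- the modified family of indicator errors
  set Y' : {e : Sym2 V // ¬ e.IsDiag} → Ω → ℤ :=
    fun e ω => if (e : Sym2 V) ∈ G.edgeFinset then 1 - Y e.1 ω else Y e.1 ω with hY'def
  have hY'meas : ∀ e, Measurable (Y' e) := by
    intro e
    by_cases hh : (e : Sym2 V) ∈ G.edgeFinset
    · simp only [hY'def, if_pos hh]; exact measurable_const.sub (hmeas e.1)
    · simp only [hY'def, if_neg hh]; exact hmeas e.1
  have hY'01 : ∀ e ω, Y' e ω = 0 ∨ Y' e ω = 1 := by
    intro e ω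
    simp only [hY'def]
    split_ifs
    · rcases h01 e.1 ω with h | h
      · right; omega
      · left; omega
    · exact h01 e.1 ω
  have hY'indep : iIndepFun Y' μ := by
    have hcomp := hindep.comp
      (g := fun (e : {e : Sym2 V // ¬ e.IsDiag}) (z : ℤ) =>
        if (e : Sym2 V) ∈ G.edgeFinset then 1 - z else z)
      (fun e => by
        by_cases hh : (e : Sym2 V) ∈ G.edgeFinset
        · simp only [if_pos hh]; exact measurable_const.sub measurable_id
        · simp only [if_neg hh]; exact measurable_id)
    exact hcomp
  -- finsets of nondiagonal pairs
  set sE : Finset {e : Sym2 V // ¬ e.IsDiag} :=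
    G.edgeFinset.subtype (fun e => ¬ e.IsDiag) with hsE
  set sEc : Finset {e : Sym2 V // ¬ e.IsDiag} :=
    Gᶜ.edgeFinset.subtype (fun e => ¬ e.IsDiag) with hsEc
  have hcardE : sE.card = G.edgeFinset.card := by
    rw [hsE, Finset.card_subtype, Finset.filter_true_of_mem]
    intro x hx
    exact SimpleGraph.not_isDiag_of_mem_edgeFinset hx
  have hcardEc : sEc.card = Gᶜ.edgeFinset.card := by
    rw [hsEc, Finset.card_subtype, Finset.filter_true_of_mem]
    intro x hx
    exact SimpleGraph.not_isDiag_of_mem_edgeFinset hx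
  have hmemE : ∀ e : {e : Sym2 V // ¬ e.IsDiag}, e ∈ sE ↔ (e : Sym2 V) ∈ G.edgeFinset := by
    intro e; rw [hsE, Finset.mem_subtype]
  have hmemEc : ∀ e : {e : Sym2 V // ¬ e.IsDiag}, e ∈ sEc ↔ (e : Sym2 V) ∈ Gᶜ.edgeFinset := by
    intro e; rw [hsEc, Finset.mem_subtype]
  -- the two sums
  set X : Ω → ℤ := fun ω => ∑ e ∈ sEc, Y' e ω with hXdef
  set Z : Ω → ℤ := fun ω => ∑ e ∈ sE, Y' e ω with hZdef
  have hXmeas : Measurable X := Finset.measurable_sum _ fun e _ => hY'meas e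
  have hZmeas : Measurable Z := Finset.measurable_sum _ fun e _ => hY'meas e
  have hXeq : ∀ ω, X ω = ∑ e ∈ Gᶜ.edgeFinset, Y e ω := by
    intro ω
    simp only [hXdef, hY'def, hsEc]
    have hsub := Finset.sum_subtype_eq_sum_filter
      (f := fun s' : Sym2 V => if s' ∈ G.edgeFinset then 1 - Y s' ω else Y s' ω)
      (s := Gᶜ.edgeFinset) (p := fun e => ¬ e.IsDiag)
    rw [hsub, Finset.filter_true_of_mem
      (fun x hx => SimpleGraph.not_isDiag_of_mem_edgeFinset hx)]
    apply Finset.sum_congr rfl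
    intro e he
    rw [if_neg (fun hc => hdisjE e hc he)]
  have hZeq : ∀ ω, Z ω = ∑ e ∈ G.edgeFinset, (1 - Y e ω) := by
    intro ω
    simp only [hZdef, hY'def, hsE]
    have hsub := Finset.sum_subtype_eq_sum_filter
      (f := fun s' : Sym2 V => if s' ∈ G.edgeFinset then 1 - Y s' ω else Y s' ω)
      (s := G.edgeFinset) (p := fun e => ¬ e.IsDiag)
    rw [hsub, Finset.filter_true_of_mem
      (fun x hx => SimpleGraph.not_isDiag_of_mem_edgeFinset hx)]
    apply Finset.sum_congr rfl
    intro e he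
    rw [if_pos he]
  have hDXZ : D = fun ω => X ω - Z ω := by
    funext ω
    rw [hD]
    simp only
    rw [hXeq ω, hZeq ω]
  -- one-dimensional marginals
  have hprobX : ∀ e ∈ sEc, (μ {ω | Y' e ω = 1}).toReal = α := by
    intro e he
    have hmem : (e : Sym2 V) ∈ Gᶜ.edgeFinset := (hmemEc e).1 he
    have hnot : (e : Sym2 V) ∉ G.edgeFinset := fun hc => hdisjE _ hc hmem
    simp only [hY'def, if_neg hnot]
    exact hYα _ hmem
  have hprobZ : ∀ e ∈ sE, (μ {ω | Y' e ω = 1}).toReal = β := by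
    intro e he
    have hmem : (e : Sym2 V) ∈ G.edgeFinset := (hmemE e).1 he
    simp only [hY'def, if_pos hmem]
    have hset : {ω | 1 - Y e.1 ω = 1} = {ω | Y e.1 ω = 1}ᶜ := by
      ext ω
      simp only [Set.mem_setOf_eq, Set.mem_compl_iff]
      rcases h01 e.1 ω with h | h <;> simp [h]
    rw [hset, SteinAux.toReal_compl' (A := {ω | Y e.1 ω = 1})
      (by exact hmeas e.1 (measurableSet_singleton 1)), hYβ _ hmem]
    ring
  -- CDF bounds from Stein--Chen
  have hsEc_ne : sEc.Nonempty := Finset.card_pos.1 (by rw [hcardEc]; omega)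
  have hsE_ne : sE.Nonempty := Finset.card_pos.1 (by rw [hcardE]; omega)
  have hXcdf : ∀ k : ℕ, |(μ {ω | X ω ≤ (k:ℤ)}).toReal - SteinAux.pcdf lam k| ≤ α := by
    intro k
    exact SteinAux.prob_core Y' hY'meas hY'01 hY'indep sEc hsEc_ne hα0 hprobX
      (lam := lam) (by rw [hcardEc]; exact hlam1) k
  have hZcdf : ∀ k : ℕ, |(μ {ω | Z ω ≤ (k:ℤ)}).toReal - SteinAux.pcdf lam k| ≤ β := by
    intro k
    exact SteinAux.prob_core Y' hY'meas hY'01 hY'indep sE hsE_ne hβ0 hprobZ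
      (lam := lam) (by rw [hcardE]; exact hlam2) k
  -- independence of the two sums
  have hXZindep : IndepFun X Z μ := by
    have hdisj : Disjoint sEc sE := by
      rw [Finset.disjoint_left]
      intro e he he'
      exact hdisjE e ((hmemE e).1 he') ((hmemEc e).1 he)
    have hfin := hY'indep.indepFun_finset sEc sE hdisj hY'meas
    have hm1 : Measurable (fun v : ({x // x ∈ sEc} → ℤ) => ∑ i ∈ Finset.univ, v i) :=
      Finset.measurable_sum _ fun i _ => measurable_pi_apply i
    have hm2 : Measurable (fun v : ({x // x ∈ sE} → ℤ) => ∑ i ∈ Finset.univ, v i) :=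
      Finset.measurable_sum _ fun i _ => measurable_pi_apply i
    have hcomp := hfin.comp hm1 hm2
    have he1 : ((fun v : ({x // x ∈ sEc} → ℤ) => ∑ i ∈ Finset.univ, v i)
        ∘ (fun a (i : {x // x ∈ sEc}) => Y' i a)) = X := by
      funext a
      simp only [Function.comp_apply, hXdef]
      exact Finset.sum_coe_sort sEc (fun e => Y' e a)
    have he2 : ((fun v : ({x // x ∈ sE} → ℤ) => ∑ i ∈ Finset.univ, v i)
        ∘ (fun a (i : {x // x ∈ sE}) => Y' i a)) = Z := by
      funext a
      simp only [Function.comp_apply, hZdef]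
      exact Finset.sum_coe_sort sE (fun e => Y' e a)
    rw [he1, he2] at hcomp
    exact hcomp
  -- bounds on values
  set N := G.edgeFinset.card with hN
  have hbZ : ∀ ω, 0 ≤ Z ω ∧ Z ω ≤ (N:ℤ) := by
    intro ω
    constructor
    · exact Finset.sum_nonneg fun e _ => by rcases hY'01 e ω with h | h <;> omega
    · calc Z ω ≤ ∑ _e ∈ sE, (1:ℤ) :=
            Finset.sum_le_sum fun e _ => by rcases hY'01 e ω with h | h <;> omega
        _ = (sE.card : ℤ) := by simp
        _ = (N:ℤ) := by rw [hcardE]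
  have hbX : ∀ ω, 0 ≤ X ω :=
    fun ω => Finset.sum_nonneg fun e _ => by rcases hY'01 e ω with h | h <;> omega
  -- per-threshold Kolmogorov bound
  have hks : ∀ m : ℤ, |(μ {ω | D ω ≤ m}).toReal
      - ((skellamMeasure lam lam) {q : ℤ | q ≤ m}).toReal| ≤ α + β := by
    intro m
    have hsetD : {ω | D ω ≤ m} = {ω | X ω - Z ω ≤ m} := by
      ext ω
      rw [hDXZ]
    rw [hsetD]
    exact SteinAux.ks_bound μ hl X Z hXmeas hZmeas hXZindep N hbZ hbX hα0.le hβ0.le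
      hXcdf hZcdf m
  have hDmeas : Measurable D := by
    rw [hDXZ]; exact hXmeas.sub hZmeas
  -- supremum over thresholds
  have hsup : dKSZ (μ.map D) (skellamMeasure lam lam) ≤ α + β := by
    rw [dKSZ]
    apply ciSup_le
    intro x
    have hset : {k : ℤ | (k:ℝ) ≤ x} = {k : ℤ | k ≤ ⌊x⌋} := by
      ext k
      simp only [Set.mem_setOf_eq]
      exact (Int.le_floor).symm
    rw [hset, Measure.map_apply hDmeas trivial]
    exact hks ⌊x⌋
  -- final arithmetic
  have htot : ((Fintype.card V : ℝ) * ((Fintype.card V : ℝ) - 1) / 2)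
      = (G.edgeFinset.card : ℝ) + (Gᶜ.edgeFinset.card : ℝ) := by
    have hunion : (⊤ : SimpleGraph V).edgeFinset = G.edgeFinset ∪ Gᶜ.edgeFinset := by
      ext e
      refine Sym2.ind (fun u v => ?_) e
      simp only [Finset.mem_union, SimpleGraph.mem_edgeFinset, SimpleGraph.mem_edgeSet,
        SimpleGraph.top_adj, SimpleGraph.compl_adj]
      constructor
      · intro h
        by_cases hadj : G.Adj u v
        · exact Or.inl hadj
        · exact Or.inr ⟨h, hadj⟩
      · rintro (h | ⟨h, _⟩)
        · exact h.ne
        · exact h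
    have hdisj2 : Disjoint G.edgeFinset Gᶜ.edgeFinset := by
      rw [Finset.disjoint_left]
      exact fun e he he' => hdisjE e he he'
    have hcard := SimpleGraph.card_edgeFinset_top_eq_card_choose_two (V := V)
    rw [hunion, Finset.card_union_of_disjoint hdisj2] at hcard
    rw [← Nat.cast_choose_two (K := ℝ) (Fintype.card V), ← hcard]
    push_cast
    ring
  have hβval : (Gᶜ.edgeFinset.card : ℝ) * α = (G.edgeFinset.card : ℝ) * β :=
    hlam1.symm.trans hlam2
  calc dKSZ (μ.map D) (skellamMeasure lam lam) ≤ α + β := hsup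
    _ = ((Fintype.card V : ℝ) * ((Fintype.card V : ℝ) - 1) / 2) * α /
        (G.edgeFinset.card : ℝ) := by
      rw [htot, eq_div_iff hEpos.ne']
      ring_nf
      nlinarith [hβval]
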